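/- Let A = F[[u,v,w,x,y,z]], char F = p > 0, and I the ideal of 2×2 minors of the 2×3 generic matrix. For q = p^e, with f_{s,t} defined by y^s z^t (Δ₂Δ₃)^{q−1} ≡ x^{s+t} f_{s,t} mod I^{[q]} (0 ≤ s + t ≤ q − 1), each f_{s,t} is well-defined modulo I^{[q]} and satisfies f_{s,t}·I ⊆ I^{[q]}, i.e., f_{s,t} ∈ I^{[q]} :_A I. -/

import Mathlib

open MvPowerSeries Finsupp

namespace Fedder

abbrev M := Fin 6 →₀ ℕ

noncomputable def s (i : Fin 6) : M := Finsupp.single i 1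

def deg (d : M) : ℕ := d 0 + d 1 + d 2 + d 3 + d 4 + d 5

def inv4 (d : M) : ℕ × ℕ × ℕ × ℕ := (d 3 + d 4 + d 5, d 0 + d 3, d 1 + d 4, d 2 + d 5)

def std (d : M) : Prop := (d 3 = 0 ∨ (d 1 = 0 ∧ d 2 = 0)) ∧ (d 1 = 0 ∨ d 5 = 0)

instance : DecidablePred std := fun d => by unfold std; infer_instance

lemma ext6 {a b : M} (h0 : a 0 = b 0) (h1 : a 1 = b 1) (h2 : a 2 = b 2) (h3 : a 3 = b 3)
    (h4 : a 4 = b 4) (h5 : a 5 = b 5) : a = b := by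
  ext i
  fin_cases i
  · exact h0
  · exact h1
  · exact h2
  · exact h3
  · exact h4
  · exact h5

lemma le6 {a b : M} (h0 : a 0 ≤ b 0) (h1 : a 1 ≤ b 1) (h2 : a 2 ≤ b 2) (h3 : a 3 ≤ b 3)
    (h4 : a 4 ≤ b 4) (h5 : a 5 ≤ b 5) : a ≤ b := by
  rw [Finsupp.le_def]
  intro i
  fin_cases i
  · exact h0
  · exact h1
  · exact h2
  · exact h3
  · exact h4
  · exact h5

lemma inv4_add (a b : M) : inv4 (a + b) = inv4 a + inv4 b := by
  simp [inv4, Prod.ext_iff]; omega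

lemma deg_eq_of_inv4 {a b : M} (h : inv4 a = inv4 b) : deg a = deg b := by
  simp only [inv4, Prod.ext_iff] at h; simp only [deg]; omega

lemma comp_le_deg (d : M) (i : Fin 6) : d i ≤ deg d := by
  have h := Finsupp.le_def.mp (le_refl d)
  unfold deg
  fin_cases i <;>
    first
    | (show d 0 ≤ _; omega) | (show d 1 ≤ _; omega) | (show d 2 ≤ _; omega)
    | (show d 3 ≤ _; omega) | (show d 4 ≤ _; omega) | (show d 5 ≤ _; omega)

lemma std_unique {a b : M} (ha : std a) (hb : std b) (h : inv4 a = inv4 b) : a = b := by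
  obtain ⟨h1, h2, h3, h4⟩ : a 3 + a 4 + a 5 = b 3 + b 4 + b 5 ∧ a 0 + a 3 = b 0 + b 3
      ∧ a 1 + a 4 = b 1 + b 4 ∧ a 2 + a 5 = b 2 + b 5 := by
    simpa [inv4, Prod.ext_iff, and_assoc] using h
  obtain ⟨ha1, ha2⟩ := ha
  obtain ⟨hb1, hb2⟩ := hb
  refine ext6 ?_ ?_ ?_ ?_ ?_ ?_ <;> omega

section Part2

variable (F : Type*) [Field F]

local notation "A" => MvPowerSeries (Fin 6) F

noncomputable def mon (d : M) : A := MvPowerSeries.monomial (R := F) d 1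

@[simp] lemma coeff_eq (g : A) (e : M) : MvPowerSeries.coeff (R := F) e g = g e := rfl

lemma sub_apply' (g h : A) (e : M) : (g - h) e = g e - h e :=
  map_sub (MvPowerSeries.coeff (R := F) e) g h

lemma add_apply' (g h : A) (e : M) : (g + h) e = g e + h e :=
  map_add (MvPowerSeries.coeff (R := F) e) g h

lemma zero_apply' (e : M) : (0 : A) e = 0 := rfl

lemma mon_mul_mon (a b : M) : mon F a * mon F b = mon F (a + b) := by
  simp [mon, MvPowerSeries.monomial_mul_monomial]

lemma X_eq_mon (i : Fin 6) : (MvPowerSeries.X i : A) = mon F (s i) := rfl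

lemma mon_apply (d e : M) : mon F d e = if e = d then 1 else 0 :=
  MvPowerSeries.coeff_monomial e d 1

lemma mul_mon_apply (a : A) (P e : M) :
    (a * mon F P) e = if P ≤ e then a (e - P) else 0 := by
  have h := MvPowerSeries.coeff_mul_monomial (m := e) (n := P) (φ := a) (1 : F)
  rw [show MvPowerSeries.coeff (R := F) e (a * MvPowerSeries.monomial (R := F) P 1)
      = (a * mon F P) e from rfl] at h
  rw [h]
  split <;> simp

noncomputable def p1 : M := s 1 + s 5
noncomputable def n1 : M := s 2 + s 4
noncomputable def p2 : M := s 2 + s 3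
noncomputable def n2 : M := s 0 + s 5
noncomputable def p3 : M := s 0 + s 4
noncomputable def n3 : M := s 1 + s 3

lemma comps :
    (p1 0 = 0 ∧ p1 1 = 1 ∧ p1 2 = 0 ∧ p1 3 = 0 ∧ p1 4 = 0 ∧ p1 5 = 1) ∧
    (n1 0 = 0 ∧ n1 1 = 0 ∧ n1 2 = 1 ∧ n1 3 = 0 ∧ n1 4 = 1 ∧ n1 5 = 0) ∧
    (p2 0 = 0 ∧ p2 1 = 0 ∧ p2 2 = 1 ∧ p2 3 = 1 ∧ p2 4 = 0 ∧ p2 5 = 0) ∧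
    (n2 0 = 1 ∧ n2 1 = 0 ∧ n2 2 = 0 ∧ n2 3 = 0 ∧ n2 4 = 0 ∧ n2 5 = 1) ∧
    (p3 0 = 1 ∧ p3 1 = 0 ∧ p3 2 = 0 ∧ p3 3 = 0 ∧ p3 4 = 1 ∧ p3 5 = 0) ∧
    (n3 0 = 0 ∧ n3 1 = 1 ∧ n3 2 = 0 ∧ n3 3 = 1 ∧ n3 4 = 0 ∧ n3 5 = 0) := by
  refine ⟨?_, ?_, ?_, ?_, ?_, ?_⟩ <;> refine ⟨?_, ?_, ?_, ?_, ?_, ?_⟩ <;>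
    simp [p1, n1, p2, n2, p3, n3, s, Finsupp.single_apply]

lemma inv4_p1 : inv4 p1 = inv4 n1 := by
  have h := comps; simp only [inv4, Prod.ext_iff]; omega

lemma inv4_p2 : inv4 p2 = inv4 n2 := by
  have h := comps; simp only [inv4, Prod.ext_iff]; omega

lemma inv4_p3 : inv4 p3 = inv4 n3 := by
  have h := comps; simp only [inv4, Prod.ext_iff]; omega

lemma deg_p1 : deg p1 = 2 := by have h := comps; simp only [deg]; omega
lemma deg_n1 : deg n1 = 2 := by have h := comps; simp only [deg]; omega
lemma deg_p2 : deg p2 = 2 := by have h := comps; simp only [deg]; omega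
lemma deg_n2 : deg n2 = 2 := by have h := comps; simp only [deg]; omega
lemma deg_p3 : deg p3 = 2 := by have h := comps; simp only [deg]; omega
lemma deg_n3 : deg n3 = 2 := by have h := comps; simp only [deg]; omega

noncomputable def D1 : A := mon F p1 - mon F n1
noncomputable def D2 : A := mon F p2 - mon F n2
noncomputable def D3 : A := mon F p3 - mon F n3

noncomputable def Isp : Ideal A := Ideal.span {D1 F, D2 F, D3 F}

def mu (d : M) : ℕ := 2 * d 1 + d 2 + 2 * d 3 + d 5

noncomputable def red : ℕ → M → M × (A × A × A)
  | 0, d => (d, 0, 0, 0)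
  | (n+1), d =>
    if d 1 ≠ 0 ∧ d 3 ≠ 0 then
      ((red n (d - n3 + p3)).1, (red n (d - n3 + p3)).2.1, (red n (d - n3 + p3)).2.2.1,
        (red n (d - n3 + p3)).2.2.2 - mon F (d - n3))
    else if d 2 ≠ 0 ∧ d 3 ≠ 0 then
      ((red n (d - p2 + n2)).1, (red n (d - p2 + n2)).2.1,
        (red n (d - p2 + n2)).2.2.1 + mon F (d - p2), (red n (d - p2 + n2)).2.2.2)
    else if d 1 ≠ 0 ∧ d 5 ≠ 0 then
      ((red n (d - p1 + n1)).1, (red n (d - p1 + n1)).2.1 + mon F (d - p1),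
        (red n (d - p1 + n1)).2.2.1, (red n (d - p1 + n1)).2.2.2)
    else (d, 0, 0, 0)

lemma sub_comp {d P : M} (i : Fin 6) : (d - P) i = d i - P i := Finsupp.tsub_apply d P i
lemma add_comp {d P : M} (i : Fin 6) : (d + P) i = d i + P i := Finsupp.add_apply d P i

lemma red_spec : ∀ n d, mu d ≤ n →
    mon F d = mon F (red F n d).1 + (red F n d).2.1 * D1 F + (red F n d).2.2.1 * D2 F
      + (red F n d).2.2.2 * D3 F
    ∧ std (red F n d).1 ∧ inv4 (red F n d).1 = inv4 d := by
  have hc := comps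
  intro n
  induction n with
  | zero =>
    intro d hd
    have hz : d 1 = 0 ∧ d 2 = 0 ∧ d 3 = 0 ∧ d 5 = 0 := by unfold mu at hd; omega
    rw [show red F 0 d = (d, 0, 0, 0) from rfl]
    refine ⟨by dsimp only; ring, ?_, rfl⟩
    dsimp only
    unfold std; omega
  | succ n IH =>
    intro d hd
    by_cases h1 : d 1 ≠ 0 ∧ d 3 ≠ 0
    · -- rule vx → uy  (uses Δ₃ : certificate  mon d = mon d' - mon (d - n3) * D3)
      have hle : n3 ≤ d := by refine le6 ?_ ?_ ?_ ?_ ?_ ?_ <;> omega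
      set d' := d - n3 + p3 with hd'
      have hcomp : ∀ i : Fin 6, d' i = d i - n3 i + p3 i := by
        intro i; rw [hd', add_comp, sub_comp]
      have hmu : mu d' ≤ n := by
        have e1 := hcomp 1; have e2 := hcomp 2; have e3 := hcomp 3; have e5 := hcomp 5
        unfold mu at hd ⊢; omega
      obtain ⟨hid, hstd, hinv⟩ := IH d' hmu
      have hmon : mon F d = mon F d' - mon F (d - n3) * D3 F := by
        have k1 : mon F (d - n3) * mon F n3 = mon F d := by
          rw [mon_mul_mon, tsub_add_cancel_of_le hle]
        have k2 : mon F (d - n3) * mon F p3 = mon F d' := by rw [mon_mul_mon, hd']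
        rw [D3, mul_sub, k1, k2]; ring
      have hred : red F (n+1) d =
          ((red F n d').1, (red F n d').2.1, (red F n d').2.2.1,
            (red F n d').2.2.2 - mon F (d - n3)) := by
        rw [red, if_pos h1]
      rw [hred]
      dsimp only
      refine ⟨?_, hstd, ?_⟩
      · rw [hmon, hid]; ring
      · rw [hinv, hd', inv4_add, inv4_p3, ← inv4_add, tsub_add_cancel_of_le hle]
    · by_cases h2 : d 2 ≠ 0 ∧ d 3 ≠ 0
      · -- rule wx → uz  (uses Δ₂ : mon d = mon d' + mon (d - p2) * D2)
        have hle : p2 ≤ d := by refine le6 ?_ ?_ ?_ ?_ ?_ ?_ <;> omega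
        set d' := d - p2 + n2 with hd'
        have hcomp : ∀ i : Fin 6, d' i = d i - p2 i + n2 i := by
          intro i; rw [hd', add_comp, sub_comp]
        have hmu : mu d' ≤ n := by
          have e1 := hcomp 1; have e2 := hcomp 2; have e3 := hcomp 3; have e5 := hcomp 5
          unfold mu at hd ⊢; omega
        obtain ⟨hid, hstd, hinv⟩ := IH d' hmu
        have hmon : mon F d = mon F d' + mon F (d - p2) * D2 F := by
          have k1 : mon F (d - p2) * mon F p2 = mon F d := by
            rw [mon_mul_mon, tsub_add_cancel_of_le hle]
          have k2 : mon F (d - p2) * mon F n2 = mon F d' := by rw [mon_mul_mon, hd']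
          rw [D2, mul_sub, k1, k2]; ring
        have hred : red F (n+1) d =
            ((red F n d').1, (red F n d').2.1, (red F n d').2.2.1 + mon F (d - p2),
              (red F n d').2.2.2) := by
          rw [red, if_neg h1, if_pos h2]
        rw [hred]
        dsimp only
        refine ⟨?_, hstd, ?_⟩
        · rw [hmon, hid]; ring
        · rw [hinv, hd', inv4_add, ← inv4_p2, ← inv4_add, tsub_add_cancel_of_le hle]
      · by_cases h3 : d 1 ≠ 0 ∧ d 5 ≠ 0
        · -- rule vz → wy  (uses Δ₁ : mon d = mon d' + mon (d - p1) * D1)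
          have hle : p1 ≤ d := by refine le6 ?_ ?_ ?_ ?_ ?_ ?_ <;> omega
          set d' := d - p1 + n1 with hd'
          have hcomp : ∀ i : Fin 6, d' i = d i - p1 i + n1 i := by
            intro i; rw [hd', add_comp, sub_comp]
          have hmu : mu d' ≤ n := by
            have e1 := hcomp 1; have e2 := hcomp 2; have e3 := hcomp 3; have e5 := hcomp 5
            unfold mu at hd ⊢; omega
          obtain ⟨hid, hstd, hinv⟩ := IH d' hmu
          have hmon : mon F d = mon F d' + mon F (d - p1) * D1 F := by
            have k1 : mon F (d - p1) * mon F p1 = mon F d := by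
              rw [mon_mul_mon, tsub_add_cancel_of_le hle]
            have k2 : mon F (d - p1) * mon F n1 = mon F d' := by rw [mon_mul_mon, hd']
            rw [D1, mul_sub, k1, k2]; ring
          have hred : red F (n+1) d =
              ((red F n d').1, (red F n d').2.1 + mon F (d - p1), (red F n d').2.2.1,
                (red F n d').2.2.2) := by
            rw [red, if_neg h1, if_neg h2, if_pos h3]
          rw [hred]
          dsimp only
          refine ⟨?_, hstd, ?_⟩
          · rw [hmon, hid]; ring
          · rw [hinv, hd', inv4_add, ← inv4_p1, ← inv4_add, tsub_add_cancel_of_le hle]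
        · have hred : red F (n+1) d = (d, 0, 0, 0) := by
            rw [red, if_neg h1, if_neg h2, if_neg h3]
          rw [hred]
          dsimp only
          refine ⟨by ring, ?_, rfl⟩
          unfold std; omega

noncomputable def nf (d : M) : M := (red F (mu d) d).1

lemma nf_std (d : M) : std (nf F d) := (red_spec F (mu d) d le_rfl).2.1
lemma nf_inv4 (d : M) : inv4 (nf F d) = inv4 d := (red_spec F (mu d) d le_rfl).2.2

lemma nf_eq_iff {d e : M} (he : std e) : nf F d = e ↔ inv4 d = inv4 e := by
  constructor
  · rintro rfl; exact (nf_inv4 F d).symm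
  · intro h; exact std_unique (nf_std F d) he ((nf_inv4 F d).trans h)

end Part2

section Part3

variable (F : Type*) [Field F]

local notation "A" => MvPowerSeries (Fin 6) F

lemma mon_mul_apply (a : A) (P e : M) :
    (mon F P * a) e = if P ≤ e then a (e - P) else 0 := by
  have h := MvPowerSeries.coeff_monomial_mul (m := e) (n := P) (φ := a) (1 : F)
  rw [show MvPowerSeries.coeff (R := F) e (MvPowerSeries.monomial (R := F) P 1 * a)
      = (mon F P * a) e from rfl] at h
  rw [h]
  split <;> simp

lemma deg_add (a b : M) : deg (a + b) = deg a + deg b := by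
  simp only [deg, add_comp]; ring

noncomputable def box (n : ℕ) : Finset M :=
  Finset.Iic (Finsupp.equivFunOnFinite.symm fun _ => n)

lemma mem_box {d : M} {n : ℕ} : d ∈ box n ↔ ∀ i, d i ≤ n := by
  simp [box, Finset.mem_Iic, Finsupp.le_def]

noncomputable def degset (n : ℕ) : Finset M := (box n).filter (fun d => deg d = n)

lemma mem_degset {d : M} {n : ℕ} : d ∈ degset n ↔ deg d = n := by
  simp only [degset, Finset.mem_filter, mem_box, and_iff_right_iff_imp]
  intro h i; rw [← h]; exact comp_le_deg d i

noncomputable def fiber (e : M) : Finset M := (box (deg e)).filter (fun d => inv4 d = inv4 e)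

lemma mem_fiber {d e : M} : d ∈ fiber e ↔ inv4 d = inv4 e := by
  simp only [fiber, Finset.mem_filter, mem_box, and_iff_right_iff_imp]
  intro h i
  exact le_trans (comp_le_deg d i) (le_of_eq (deg_eq_of_inv4 h))

noncomputable def N (g : A) : A := fun e => if std e then ∑ d ∈ fiber e, g d else 0

lemma N_apply (g : A) (e : M) : N F g e = if std e then ∑ d ∈ fiber e, g d else 0 := rfl

lemma N_sub (g h : A) : N F (g - h) = N F g - N F h := by
  funext e
  rw [sub_apply', N_apply, N_apply, N_apply]
  split
  · rw [show ∑ d ∈ fiber e, (g - h) d = ∑ d ∈ fiber e, (g d - h d) from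
      Finset.sum_congr rfl fun d _ => sub_apply' F g h d]
    exact Finset.sum_sub_distrib _ _
  · rw [sub_zero]

lemma N_add (g h : A) : N F (g + h) = N F g + N F h := by
  funext e
  rw [add_apply', N_apply, N_apply, N_apply]
  split
  · rw [show ∑ d ∈ fiber e, (g + h) d = ∑ d ∈ fiber e, (g d + h d) from
      Finset.sum_congr rfl fun d _ => add_apply' F g h d]
    exact Finset.sum_add_distrib
  · rw [add_zero]

lemma N_supp_std {g : A} {e : M} (h : N F g e ≠ 0) : std e := by
  by_contra hs; exact h (if_neg hs)

lemma sum_shift (e P : M) (a : A) :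
    ∑ d ∈ fiber e, (if P ≤ d then a (d - P) else 0)
      = ∑ d' ∈ (box (deg e)).filter (fun d' => inv4 d' + inv4 P = inv4 e), a d' := by
  refine Finset.sum_bij_ne_zero (fun d _ _ => d - P) ?_ ?_ ?_ ?_
  · intro d hmem hne
    have hP : P ≤ d := by
      by_contra hc; rw [if_neg hc] at hne; exact hne rfl
    rw [Finset.mem_filter, mem_box]
    constructor
    · intro i
      calc (d - P) i ≤ d i := by rw [sub_comp]; omega
        _ ≤ deg d := comp_le_deg d i
        _ = deg e := deg_eq_of_inv4 (mem_fiber.mp hmem)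
    · rw [← inv4_add, tsub_add_cancel_of_le hP]
      exact mem_fiber.mp hmem
  · intro d1 hm1 hn1 d2 hm2 hn2 heq
    change d1 - P = d2 - P at heq
    have hP1 : P ≤ d1 := by by_contra hc; rw [if_neg hc] at hn1; exact hn1 rfl
    have hP2 : P ≤ d2 := by by_contra hc; rw [if_neg hc] at hn2; exact hn2 rfl
    calc d1 = d1 - P + P := (tsub_add_cancel_of_le hP1).symm
      _ = d2 - P + P := by rw [heq]
      _ = d2 := tsub_add_cancel_of_le hP2
  · intro d' hd' hne
    refine ⟨d' + P, ?_, ?_, ?_⟩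
    · rw [mem_fiber, inv4_add]
      exact (Finset.mem_filter.mp hd').2
    · rw [if_pos le_add_self, add_tsub_cancel_right]
      exact hne
    · show d' + P - P = d'
      rw [add_tsub_cancel_right]
  · intro d hmem hne
    have hP : P ≤ d := by by_contra hc; rw [if_neg hc] at hne; exact hne rfl
    rw [if_pos hP]

lemma mul_D_apply (a : A) (P Q : M) (d : M) :
    (a * (mon F P - mon F Q)) d
      = (if P ≤ d then a (d - P) else 0) - (if Q ≤ d then a (d - Q) else 0) := by
  rw [mul_sub, sub_apply', mul_mon_apply, mul_mon_apply]

lemma N_mul_gen (a : A) (P Q : M) (h : inv4 P = inv4 Q) :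
    N F (a * (mon F P - mon F Q)) = 0 := by
  funext e
  rw [N_apply, zero_apply']
  split
  · have hterm : ∀ d ∈ fiber e, (a * (mon F P - mon F Q)) d
        = (if P ≤ d then a (d - P) else 0) - (if Q ≤ d then a (d - Q) else 0) :=
      fun d _ => mul_D_apply F a P Q d
    rw [Finset.sum_congr rfl hterm, Finset.sum_sub_distrib, sum_shift, sum_shift, h, sub_self]
  · rfl

lemma N_mul_D1 (a : A) : N F (a * D1 F) = 0 := N_mul_gen F a p1 n1 inv4_p1
lemma N_mul_D2 (a : A) : N F (a * D2 F) = 0 := N_mul_gen F a p2 n2 inv4_p2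
lemma N_mul_D3 (a : A) : N F (a * D3 F) = 0 := N_mul_gen F a p3 n3 inv4_p3

lemma mem_Isp_iff {g : A} :
    g ∈ Isp F ↔ ∃ a b c : A, g = a * D1 F + b * D2 F + c * D3 F := by
  constructor
  · intro hg
    rw [Isp, show ({D1 F, D2 F, D3 F} : Set A) = insert (D1 F) {D2 F, D3 F} from rfl,
      Ideal.mem_span_insert] at hg
    obtain ⟨a, z, hz, rfl⟩ := hg
    rw [Ideal.mem_span_pair] at hz
    obtain ⟨b, c, rfl⟩ := hz
    exact ⟨a, b, c, by ring⟩
  · rintro ⟨a, b, c, rfl⟩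
    refine Ideal.add_mem _ (Ideal.add_mem _ ?_ ?_) ?_ <;>
      refine Ideal.mul_mem_left _ _ (Ideal.subset_span ?_) <;> simp [Isp]

lemma N_vanish {g : A} (h : g ∈ Isp F) : N F g = 0 := by
  obtain ⟨a, b, c, rfl⟩ := mem_Isp_iff F |>.mp h
  rw [N_add, N_add, N_mul_D1, N_mul_D2, N_mul_D3, add_zero, add_zero]

lemma deg_sub_add {e P : M} (h : P ≤ e) : deg (e - P) + deg P = deg e := by
  have h' := Finsupp.le_def.mp h
  have c0 := h' 0; have c1 := h' 1; have c2 := h' 2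
  have c3 := h' 3; have c4 := h' 4; have c5 := h' 5
  simp only [deg, sub_comp]
  omega

lemma cert_mul_gen (g CC : A) (c : M → A)
    (hCC : ∀ e', CC e' = ∑ d ∈ degset (deg e' + 2), g d * c d e')
    (P Q : M) (hP : deg P = 2) (hQ : deg Q = 2) (e : M) :
    (CC * (mon F P - mon F Q)) e
      = ∑ d ∈ degset (deg e), g d * ((c d * (mon F P - mon F Q)) e) := by
  have key : ∀ R : M, deg R = 2 →
      (if R ≤ e then CC (e - R) else 0)
        = ∑ d ∈ degset (deg e), g d * (if R ≤ e then c d (e - R) else 0) := by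
    intro R hdR
    split_ifs with h
    · rw [hCC]
      have hh : deg (e - R) + 2 = deg e := by rw [← hdR]; exact deg_sub_add h
      rw [hh]
    · simp
  rw [mul_D_apply, key P hP, key Q hQ, ← Finset.sum_sub_distrib]
  refine Finset.sum_congr rfl fun d _ => ?_
  rw [mul_D_apply, mul_sub]

noncomputable def ca (g : A) : A :=
  fun e => ∑ d ∈ degset (deg e + 2), g d * (red F (mu d) d).2.1 e
noncomputable def cb (g : A) : A :=
  fun e => ∑ d ∈ degset (deg e + 2), g d * (red F (mu d) d).2.2.1 e
noncomputable def cc (g : A) : A :=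
  fun e => ∑ d ∈ degset (deg e + 2), g d * (red F (mu d) d).2.2.2 e

lemma step3 (g : A) (e : M) :
    ∑ d ∈ degset (deg e), g d * ((mon F d - mon F (nf F d)) e) = g e - N F g e := by
  have hterm : ∀ d ∈ degset (deg e), g d * ((mon F d - mon F (nf F d)) e)
      = (if e = d then g d else 0) - (if nf F d = e then g d else 0) := by
    intro d _
    rw [sub_apply', mon_apply, mon_apply]
    by_cases h1 : e = d <;> by_cases h2 : e = nf F d <;>
      simp [h1, h2, eq_comm, mul_sub]
  rw [Finset.sum_congr rfl hterm, Finset.sum_sub_distrib]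
  congr 1
  · rw [Finset.sum_ite_eq (degset (deg e)) e g, if_pos (mem_degset.mpr rfl)]
  · refine (Finset.sum_filter _ _).symm.trans ?_
    by_cases hstd : std e
    · have hset : (degset (deg e)).filter (fun d => nf F d = e) = fiber e := by
        ext d
        simp only [Finset.mem_filter, mem_degset, mem_fiber]
        constructor
        · rintro ⟨_, h⟩
          exact (nf_inv4 F d).symm.trans (congrArg inv4 h)
        · intro h
          exact ⟨deg_eq_of_inv4 h, (nf_eq_iff F hstd).mpr h⟩
      rw [hset, N_apply, if_pos hstd]
    · have hset : (degset (deg e)).filter (fun d => nf F d = e) = ∅ := by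
        ext d
        simp only [Finset.mem_filter, Finset.notMem_empty, iff_false, not_and]
        intro _ h
        exact hstd (h ▸ nf_std F d)
      rw [hset]
      exact Finset.sum_empty.trans (by rw [N_apply, if_neg hstd])

lemma sub_N_mem (g : A) : g - N F g ∈ Isp F := by
  rw [mem_Isp_iff]
  refine ⟨ca F g, cb F g, cc F g, ?_⟩
  funext e
  have e1 := cert_mul_gen F g (ca F g) (fun d => (red F (mu d) d).2.1)
    (fun _ => rfl) p1 n1 deg_p1 deg_n1 e
  have e2 := cert_mul_gen F g (cb F g) (fun d => (red F (mu d) d).2.2.1)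
    (fun _ => rfl) p2 n2 deg_p2 deg_n2 e
  have e3 := cert_mul_gen F g (cc F g) (fun d => (red F (mu d) d).2.2.2)
    (fun _ => rfl) p3 n3 deg_p3 deg_n3 e
  rw [sub_apply']
  rw [show D1 F = mon F p1 - mon F n1 from rfl, show D2 F = mon F p2 - mon F n2 from rfl,
    show D3 F = mon F p3 - mon F n3 from rfl]
  rw [add_apply', add_apply', e1, e2, e3]
  rw [← Finset.sum_add_distrib, ← Finset.sum_add_distrib]
  have hterm : ∀ d ∈ degset (deg e),
      g d * (((red F (mu d) d).2.1 * (mon F p1 - mon F n1)) e)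
        + g d * (((red F (mu d) d).2.2.1 * (mon F p2 - mon F n2)) e)
        + g d * (((red F (mu d) d).2.2.2 * (mon F p3 - mon F n3)) e)
      = g d * ((mon F d - mon F (nf F d)) e) := by
    intro d _
    have hid := (red_spec F (mu d) d le_rfl).1
    have hkey : mon F d - mon F (nf F d)
        = (red F (mu d) d).2.1 * (mon F p1 - mon F n1)
          + (red F (mu d) d).2.2.1 * (mon F p2 - mon F n2)
          + (red F (mu d) d).2.2.2 * (mon F p3 - mon F n3) := by
      rw [show mon F p1 - mon F n1 = D1 F from rfl, show mon F p2 - mon F n2 = D2 F from rfl,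
        show mon F p3 - mon F n3 = D3 F from rfl, nf]
      rw [hid]; ring
    rw [hkey, add_apply', add_apply']
    ring
  rw [Finset.sum_congr rfl hterm, step3]

lemma N_x_inj {k : A} (hk : ∀ e, k e ≠ 0 → std e) (h : N F (MvPowerSeries.X 3 * k) = 0) :
    k = 0 := by
  funext e0
  rw [zero_apply']
  by_cases hstd : std e0
  · set E := nf F (e0 + s 3) with hE
    have hEstd : std E := nf_std F _
    have hEinv : inv4 E = inv4 e0 + inv4 (s 3) := by rw [hE, nf_inv4, inv4_add]
    have hEdeg : deg E = deg e0 + deg (s 3) := by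
      rw [hE, deg_eq_of_inv4 (nf_inv4 F _), deg_add]
    have h0 : N F (MvPowerSeries.X 3 * k) E = 0 := by rw [h]; rfl
    rw [N_apply, if_pos hEstd] at h0
    have hterm : ∀ d ∈ fiber E, ((MvPowerSeries.X 3 : MvPowerSeries (Fin 6) F) * k) d
        = if s 3 ≤ d then k (d - s 3) else 0 := by
      intro d _
      rw [X_eq_mon, mon_mul_apply]
    rw [Finset.sum_congr rfl hterm, sum_shift] at h0
    have he0mem : e0 ∈ (box (deg E)).filter (fun d' => inv4 d' + inv4 (s 3) = inv4 E) := by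
      rw [Finset.mem_filter, mem_box]
      exact ⟨fun i => le_trans (comp_le_deg e0 i) (by omega), hEinv.symm⟩
    have hsum : ∑ d' ∈ (box (deg E)).filter (fun d' => inv4 d' + inv4 (s 3) = inv4 E), k d'
        = k e0 := by
      refine Finset.sum_eq_single_of_mem e0 he0mem ?_
      intro d' hd' hne
      by_contra hkd
      have hstd' : std d' := hk d' hkd
      have : inv4 d' + inv4 (s 3) = inv4 e0 + inv4 (s 3) := by
        rw [(Finset.mem_filter.mp hd').2, hEinv]
      exact hne (std_unique hstd' hstd (add_right_cancel this))
    rw [hsum] at h0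
    exact h0
  · by_contra hne
    exact hstd (hk e0 hne)

lemma x_reg {h : A} (hx : MvPowerSeries.X 3 * h ∈ Isp F) : h ∈ Isp F := by
  have h1 : h - N F h ∈ Isp F := sub_N_mem F h
  have h2 : MvPowerSeries.X 3 * (h - N F h) ∈ Isp F := Ideal.mul_mem_left _ _ h1
  have h3 : MvPowerSeries.X 3 * N F h ∈ Isp F := by
    have heq : MvPowerSeries.X 3 * N F h
        = MvPowerSeries.X 3 * h - MvPowerSeries.X 3 * (h - N F h) := by ring
    rw [heq]
    exact Ideal.sub_mem _ hx h2
  have h4 : N F (MvPowerSeries.X 3 * N F h) = 0 := N_vanish F h3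
  have h5 : N F h = 0 := N_x_inj F (fun e => N_supp_std F) h4
  rw [h5, sub_zero] at h1
  exact h1

end Part3

section Part4

variable (F : Type*) [Field F] (q : ℕ)

local notation "A" => MvPowerSeries (Fin 6) F

noncomputable def divq (e : M) : M := e.mapRange (· / q) (Nat.zero_div q)

lemma divq_apply (e : M) (i : Fin 6) : divq q e i = e i / q := Finsupp.mapRange_apply

lemma smul_comp (d : M) (i : Fin 6) : (q • d) i = q * d i := by simp

lemma divq_smul (hq : 0 < q) (d : M) : divq q (q • d) = d := by
  ext i
  rw [divq_apply, smul_comp, Nat.mul_div_cancel_left _ hq]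

lemma smul_divq {e : M} (h : ∀ i, q ∣ e i) : q • divq q e = e := by
  ext i
  rw [smul_comp, divq_apply, Nat.mul_div_cancel' (h i)]

lemma smul_inj (hq : 0 < q) {d1 d2 : M} (h : q • d1 = q • d2) : d1 = d2 := by
  ext i
  have := congrArg (fun f : M => f i) h
  simp only [smul_comp] at this
  exact Nat.eq_of_mul_eq_mul_left hq this

noncomputable def dil (g : A) : A :=
  fun e => if ∀ i : Fin 6, q ∣ e i then g (divq q e) else 0

lemma dil_apply (g : A) (e : M) :
    dil F q g e = if ∀ i : Fin 6, q ∣ e i then g (divq q e) else 0 := rfl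

lemma dil_apply_smul (hq : 0 < q) (g : A) (d : M) : dil F q g (q • d) = g d := by
  rw [dil_apply, if_pos fun i => by rw [smul_comp]; exact ⟨d i, rfl⟩, divq_smul q hq]

lemma dil_apply_of_not (g : A) {e : M} (h : ¬ ∀ i : Fin 6, q ∣ e i) : dil F q g e = 0 :=
  if_neg h

lemma dil_add (g h : A) : dil F q (g + h) = dil F q g + dil F q h := by
  funext e
  rw [add_apply', dil_apply, dil_apply, dil_apply]
  split_ifs with hc
  · rw [add_apply']
  · rw [add_zero]

lemma dil_mon (hq : 0 < q) (d : M) : dil F q (mon F d) = mon F (q • d) := by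
  funext e
  by_cases h : ∀ i : Fin 6, q ∣ e i
  · rw [dil_apply, if_pos h, mon_apply, mon_apply]
    by_cases hde : divq q e = d
    · rw [if_pos hde, if_pos (by rw [← hde, smul_divq q h])]
    · rw [if_neg hde, if_neg (by intro hc; exact hde (by rw [hc, divq_smul q hq]))]
  · rw [dil_apply_of_not F q _ h, mon_apply, if_neg]
    intro hc
    exact h fun i => by rw [hc, smul_comp]; exact ⟨d i, rfl⟩

lemma dil_mul (hq : 0 < q) (g h : A) : dil F q (g * h) = dil F q g * dil F q h := by
  funext e
  by_cases hdiv : ∀ i : Fin 6, q ∣ e i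
  · have he : e = q • divq q e := (smul_divq q hdiv).symm
    rw [dil_apply, if_pos hdiv]
    rw [show ((g * h) (divq q e) : F) = MvPowerSeries.coeff (R := F) (divq q e) (g * h) from rfl,
      show ((dil F q g * dil F q h) e : F)
        = MvPowerSeries.coeff (R := F) e (dil F q g * dil F q h) from rfl,
      MvPowerSeries.coeff_mul, MvPowerSeries.coeff_mul]
    simp only [coeff_eq]
    refine Finset.sum_bij_ne_zero (fun pr _ _ => (q • pr.1, q • pr.2)) ?_ ?_ ?_ ?_
    · intro pr hmem hne
      rw [Finset.HasAntidiagonal.mem_antidiagonal] at hmem ⊢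
      rw [← smul_add, hmem, ← he]
    · intro pr1 hm1 hn1 pr2 hm2 hn2 heq
      rw [Prod.mk.injEq] at heq
      exact Prod.ext (smul_inj q hq heq.1) (smul_inj q hq heq.2)
    · intro pr hmem hne
      have h1 : ∀ i : Fin 6, q ∣ pr.1 i := by
        by_contra hc
        rw [dil_apply_of_not F q _ hc, zero_mul] at hne
        exact hne rfl
      have h2 : ∀ i : Fin 6, q ∣ pr.2 i := by
        by_contra hc
        rw [dil_apply_of_not F q _ hc, mul_zero] at hne
        exact hne rfl
      refine ⟨(divq q pr.1, divq q pr.2), ?_, ?_, ?_⟩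
      · rw [Finset.HasAntidiagonal.mem_antidiagonal] at hmem ⊢
        apply smul_inj q hq
        rw [smul_add, smul_divq q h1, smul_divq q h2, hmem, ← he]
      · rw [dil_apply, if_pos h1, dil_apply, if_pos h2] at hne
        exact hne
      · show (q • divq q pr.1, q • divq q pr.2) = pr
        rw [Prod.mk.injEq]
        exact ⟨smul_divq q h1, smul_divq q h2⟩
    · intro pr hmem hne
      show g pr.1 * h pr.2 = dil F q g (q • pr.1) * dil F q h (q • pr.2)
      rw [dil_apply_smul F q hq, dil_apply_smul F q hq]
  · rw [dil_apply_of_not F q _ hdiv]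
    rw [show ((dil F q g * dil F q h) e : F) = MvPowerSeries.coeff (R := F) e (dil F q g * dil F q h)
      from rfl, MvPowerSeries.coeff_mul]
    simp only [coeff_eq]
    refine (Finset.sum_eq_zero ?_).symm
    intro pr hmem
    rw [Finset.HasAntidiagonal.mem_antidiagonal] at hmem
    by_cases h1 : ∀ i : Fin 6, q ∣ pr.1 i
    · by_cases h2 : ∀ i : Fin 6, q ∣ pr.2 i
      · exact absurd (fun i => by rw [← hmem, add_comp]; exact Nat.dvd_add (h1 i) (h2 i)) hdiv
      · rw [dil_apply_of_not F q _ h2, mul_zero]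
    · rw [dil_apply_of_not F q _ h1, zero_mul]

lemma mon_pow (d : M) (n : ℕ) : mon F d ^ n = mon F (n • d) := by
  induction n with
  | zero => simp [mon]
  | succ n ih =>
    rw [pow_succ, ih, mon_mul_mon, succ_nsmul]

noncomputable def pir (r : M) (g : A) : A := fun d => g (q • d + r)

lemma pir_apply (r : M) (g : A) (d : M) : pir F q r g d = g (q • d + r) := rfl

lemma pir_add (r : M) (g h : A) : pir F q r (g + h) = pir F q r g + pir F q r h := by
  funext d
  rw [add_apply', pir_apply, pir_apply, pir_apply, add_apply']

lemma pir_mul_dil (hq : 0 < q) (r : M) (hr : ∀ i, r i < q) (h g : A) :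
    pir F q r (h * dil F q g) = pir F q r h * g := by
  funext d
  rw [pir_apply]
  rw [show ((h * dil F q g) (q • d + r) : F)
      = MvPowerSeries.coeff (R := F) (q • d + r) (h * dil F q g) from rfl,
    show ((pir F q r h * g) d : F) = MvPowerSeries.coeff (R := F) d (pir F q r h * g) from rfl,
    MvPowerSeries.coeff_mul, MvPowerSeries.coeff_mul]
  simp only [coeff_eq]
  refine Finset.sum_bij_ne_zero (fun pr _ _ => (d - divq q pr.2, divq q pr.2)) ?_ ?_ ?_ ?_
  · intro pr hmem hne
    rw [Finset.HasAntidiagonal.mem_antidiagonal] at hmem ⊢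
    have h2 : ∀ i : Fin 6, q ∣ pr.2 i := by
      by_contra hc
      rw [dil_apply_of_not F q _ hc, mul_zero] at hne
      exact hne rfl
    have hle : divq q pr.2 ≤ d := by
      rw [Finsupp.le_def]
      intro i
      obtain ⟨c, hc⟩ := h2 i
      rw [divq_apply, hc, Nat.mul_div_cancel_left _ hq]
      by_contra hlt
      push_neg at hlt
      have hmul : q * (d i + 1) ≤ q * c := Nat.mul_le_mul_left q hlt
      have hsum := congrArg (fun f : M => f i) hmem
      simp only [add_comp, smul_comp] at hsum
      have hri := hr i
      nlinarith [hsum, hc, hmul, hri]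
    exact tsub_add_cancel_of_le hle
  · intro pr1 hm1 hn1 pr2 hm2 hn2 heq
    rw [Finset.HasAntidiagonal.mem_antidiagonal] at hm1 hm2
    change (_, _) = (_, _) at heq
    rw [Prod.mk.injEq] at heq
    have h21 : ∀ i : Fin 6, q ∣ pr1.2 i := by
      by_contra hc
      rw [dil_apply_of_not F q _ hc, mul_zero] at hn1
      exact hn1 rfl
    have h22 : ∀ i : Fin 6, q ∣ pr2.2 i := by
      by_contra hc
      rw [dil_apply_of_not F q _ hc, mul_zero] at hn2
      exact hn2 rfl
    have he2 : pr1.2 = pr2.2 := by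
      rw [← smul_divq q h21, ← smul_divq q h22, heq.2]
    have he1 : pr1.1 = pr2.1 := by
      have hx := hm1.trans hm2.symm
      rw [he2] at hx
      exact add_right_cancel hx
    exact Prod.ext he1 he2
  · intro pr hmem hne
    rw [Finset.HasAntidiagonal.mem_antidiagonal] at hmem
    refine ⟨(q • pr.1 + r, q • pr.2), ?_, ?_, ?_⟩
    · rw [Finset.HasAntidiagonal.mem_antidiagonal]
      rw [add_right_comm, ← smul_add, hmem]
    · rw [dil_apply_smul F q hq]
      exact hne
    · show (d - divq q (q • pr.2), divq q (q • pr.2)) = pr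
      rw [Prod.mk.injEq]
      constructor
      · rw [divq_smul q hq, ← hmem, add_tsub_cancel_right]
      · rw [divq_smul q hq]
  · intro pr hmem hne
    rw [Finset.HasAntidiagonal.mem_antidiagonal] at hmem
    have h2 : ∀ i : Fin 6, q ∣ pr.2 i := by
      by_contra hc
      rw [dil_apply_of_not F q _ hc, mul_zero] at hne
      exact hne rfl
    have hle : divq q pr.2 ≤ d := by
      rw [Finsupp.le_def]
      intro i
      obtain ⟨c, hc⟩ := h2 i
      rw [divq_apply, hc, Nat.mul_div_cancel_left _ hq]
      by_contra hlt
      push_neg at hlt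
      have hmul : q * (d i + 1) ≤ q * c := Nat.mul_le_mul_left q hlt
      have hsum := congrArg (fun f : M => f i) hmem
      simp only [add_comp, smul_comp] at hsum
      have hri := hr i
      nlinarith [hsum, hc, hmul, hri]
    have hpr1 : pr.1 = q • (d - divq q pr.2) + r := by
      have hcomp : ∀ i : Fin 6, pr.1 i = (q • (d - divq q pr.2) + r) i := by
        intro i
        have h1' := congrArg (fun f : M => f i) hmem
        simp only [add_comp, smul_comp] at h1'
        have h2' := Finsupp.le_def.mp hle i
        obtain ⟨c, hc⟩ := h2 i
        rw [add_comp, smul_comp, sub_comp, divq_apply, hc, Nat.mul_div_cancel_left _ hq]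
        rw [divq_apply, hc, Nat.mul_div_cancel_left _ hq] at h2'
        have e1 : (d i - c) + c = d i := by omega
        have e2 : q * (d i - c) + q * c = q * d i := by rw [← Nat.mul_add, e1]
        linarith [h1', hc, e2]
      exact ext6 (hcomp 0) (hcomp 1) (hcomp 2) (hcomp 3) (hcomp 4) (hcomp 5)
    show h pr.1 * dil F q g pr.2 = pir F q r h (d - divq q pr.2) * g (divq q pr.2)
    have hdg : dil F q g pr.2 = g (divq q pr.2) := by
      conv_lhs => rw [← smul_divq q h2]
      rw [dil_apply_smul F q hq]
    rw [hdg, pir_apply, ← hpr1]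

end Part4

section Part5

variable (F : Type*) [Field F] (q : ℕ)

local notation "A" => MvPowerSeries (Fin 6) F

lemma mem_span_triple {R : Type*} [CommRing R] {x y z g : R} :
    g ∈ Ideal.span {x, y, z} ↔ ∃ a b c, g = a * x + b * y + c * z := by
  constructor
  · intro hg
    rw [show ({x, y, z} : Set R) = insert x {y, z} from rfl, Ideal.mem_span_insert] at hg
    obtain ⟨a, w, hw, rfl⟩ := hg
    rw [Ideal.mem_span_pair] at hw
    obtain ⟨b, c, rfl⟩ := hw
    exact ⟨a, b, c, by ring⟩
  · rintro ⟨a, b, c, rfl⟩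
    refine Ideal.add_mem _ (Ideal.add_mem _ ?_ ?_) ?_ <;>
      refine Ideal.mul_mem_left _ _ (Ideal.subset_span ?_) <;> simp

lemma s_comp (i j : Fin 6) : s i j = if i = j then 1 else 0 := Finsupp.single_apply

noncomputable def modq (e : M) : M := e.mapRange (· % q) (Nat.zero_mod q)

lemma modq_apply (e : M) (i : Fin 6) : modq q e i = e i % q := Finsupp.mapRange_apply

lemma decomp (hq : 0 < q) (g : A) :
    g = ∑ r ∈ box (q - 1), mon F r * dil F q (pir F q r g) := by
  funext e
  rw [show ((∑ r ∈ box (q - 1), mon F r * dil F q (pir F q r g)) e : F)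
      = ∑ r ∈ box (q - 1), (mon F r * dil F q (pir F q r g)) e from
    map_sum (MvPowerSeries.coeff (R := F) e) _ _]
  have hterm : ∀ r ∈ box (q - 1), (mon F r * dil F q (pir F q r g)) e
      = if r ≤ e then (if ∀ i : Fin 6, q ∣ (e - r) i then g (q • divq q (e - r) + r) else 0)
        else 0 := by
    intro r _
    rw [mon_mul_apply, dil_apply]
    split_ifs <;> rfl
  rw [Finset.sum_congr rfl hterm]
  have hr0mem : modq q e ∈ box (q - 1) := by
    rw [mem_box]
    intro i
    rw [modq_apply]
    have := Nat.mod_lt (e i) hq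
    omega
  rw [Finset.sum_eq_single_of_mem (modq q e) hr0mem ?side1]
  case side1 =>
    intro r hr hne
    rw [mem_box] at hr
    split_ifs with hle hdvd
    · exfalso
      apply hne
      have hcomp : ∀ i, r i = modq q e i := by
        intro i
        obtain ⟨c, hc⟩ := hdvd i
        rw [sub_comp] at hc
        have h1 : r i ≤ e i := Finsupp.le_def.mp hle i
        have h2 : r i < q := by have := hr i; omega
        have h3 : e i = q * c + r i := by omega
        rw [modq_apply, h3, Nat.mul_add_mod, Nat.mod_eq_of_lt h2]
      exact ext6 (hcomp 0) (hcomp 1) (hcomp 2) (hcomp 3) (hcomp 4) (hcomp 5)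
    · rfl
    · rfl
  · have hle : modq q e ≤ e := by
      rw [Finsupp.le_def]
      intro i
      rw [modq_apply]
      exact Nat.mod_le _ _
    have hkey : ∀ i, e i - e i % q = q * (e i / q) := by
      intro i
      have h' := Nat.mod_add_div (e i) q
      omega
    have hdvd : ∀ i : Fin 6, q ∣ (e - modq q e) i := by
      intro i
      rw [sub_comp, modq_apply, hkey i]
      exact ⟨_, rfl⟩
    rw [if_pos hle, if_pos hdvd]
    congr 1
    have hcomp : ∀ i, (q • divq q (e - modq q e) + modq q e) i = e i := by
      intro i
      rw [add_comp, smul_comp, divq_apply, sub_comp, modq_apply, hkey i,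
        Nat.mul_div_cancel_left _ hq]
      have := Nat.div_add_mod (e i) q
      omega
    exact (ext6 (hcomp 0) (hcomp 1) (hcomp 2) (hcomp 3) (hcomp 4) (hcomp 5)).symm

noncomputable def Iqsp : Ideal A :=
  Ideal.span {dil F q (D1 F), dil F q (D2 F), dil F q (D3 F)}

lemma recon (hq : 0 < q) {g : A} (h : ∀ r ∈ box (q - 1), pir F q r g ∈ Isp F) :
    g ∈ Iqsp F q := by
  rw [decomp F q hq g]
  apply Ideal.sum_mem
  intro r hr
  obtain ⟨a, b, c, habc⟩ := (mem_Isp_iff F).mp (h r hr)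
  rw [habc, dil_add, dil_add, dil_mul F q hq, dil_mul F q hq, dil_mul F q hq]
  rw [mul_add, mul_add]
  refine Ideal.add_mem _ (Ideal.add_mem _ ?_ ?_) ?_ <;>
  · rw [← mul_assoc]
    refine Ideal.mul_mem_left _ _ (Ideal.subset_span ?_)
    simp [Iqsp]

lemma pir_x_pos (r : M) (h3 : r 3 ≠ 0) (g : A) :
    pir F q r ((MvPowerSeries.X 3 : A) * g) = pir F q (r - s 3) g := by
  have hs3r : s 3 ≤ r := by
    refine le6 ?_ ?_ ?_ ?_ ?_ ?_ <;> simp [s_comp] <;> omega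
  funext d
  rw [pir_apply, pir_apply, X_eq_mon, mon_mul_apply,
    if_pos (hs3r.trans ((le_add_self : r ≤ q • d + r))), add_tsub_assoc_of_le hs3r]

lemma pir_x_zero (hq : 0 < q) (r : M) (h3 : r 3 = 0) (g : A) :
    pir F q r ((MvPowerSeries.X 3 : A) * g)
      = (MvPowerSeries.X 3 : A) * pir F q (r + (q - 1) • s 3) g := by
  funext d
  rw [pir_apply, X_eq_mon, mon_mul_apply, mon_mul_apply]
  by_cases hd3 : d 3 = 0
  · rw [if_neg, if_neg]
    · intro hc
      have := Finsupp.le_def.mp hc 3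
      rw [s_comp] at this
      simp at this
      omega
    · intro hc
      have := Finsupp.le_def.mp hc 3
      rw [s_comp, add_comp, smul_comp] at this
      simp at this
      have hz : q * d 3 = 0 := by rw [hd3]; ring
      omega
  · have hle1 : s 3 ≤ d := by
      refine le6 ?_ ?_ ?_ ?_ ?_ ?_ <;> simp [s_comp] <;> omega
    have hle2 : s 3 ≤ q • d + r := by
      refine hle1.trans (le6 ?_ ?_ ?_ ?_ ?_ ?_) <;>
      · rw [add_comp, smul_comp]
        exact le_add_right (Nat.le_mul_of_pos_left _ hq)
    rw [if_pos hle1, if_pos hle2, pir_apply]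
    congr 1
    have hmul : q * (d 3 - 1) + q * 1 = q * d 3 := by
      rw [← Nat.mul_add]
      congr 1
      omega
    have hcomp : ∀ i, (q • d + r - s 3) i = (q • (d - s 3) + (r + (q - 1) • s 3)) i := by
      intro i
      rw [sub_comp, add_comp, smul_comp, add_comp, smul_comp, sub_comp, add_comp, smul_comp]
      by_cases hi : i = (3 : Fin 6)
      · subst hi
        rw [s_comp, if_pos rfl]
        have hd3' : 1 ≤ d 3 := by omega
        have hq1 : q * 1 = q := Nat.mul_one q
        omega
      · rw [s_comp, if_neg (by intro hc; exact hi hc.symm)]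
        simp
    exact ext6 (hcomp 0) (hcomp 1) (hcomp 2) (hcomp 3) (hcomp 4) (hcomp 5)

lemma x_reg_q (hq : 0 < q) {g : A} (hx : (MvPowerSeries.X 3 : A) * g ∈ Iqsp F q) :
    g ∈ Iqsp F q := by
  obtain ⟨a, b, c, habc⟩ := (mem_span_triple).mp hx
  have hpir : ∀ r : M, (∀ i, r i < q) →
      pir F q r ((MvPowerSeries.X 3 : A) * g) ∈ Isp F := by
    intro r hrlt
    rw [habc, pir_add, pir_add, pir_mul_dil F q hq r hrlt, pir_mul_dil F q hq r hrlt,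
      pir_mul_dil F q hq r hrlt]
    rw [mem_Isp_iff]
    exact ⟨_, _, _, rfl⟩
  apply recon F q hq
  intro r' hr'
  rw [mem_box] at hr'
  by_cases h3 : r' 3 = q - 1
  · set r := r' - (q - 1) • s 3 with hrdef
    have hr3 : r 3 = 0 := by
      rw [hrdef, sub_comp, smul_comp, s_comp, if_pos rfl]
      omega
    have hrlt : ∀ i, r i < q := by
      intro i
      rw [hrdef, sub_comp]
      have := hr' i
      omega
    have hrr : r + (q - 1) • s 3 = r' := by
      have hcomp : ∀ i, (r + (q - 1) • s 3) i = r' i := by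
        intro i
        rw [add_comp, smul_comp, hrdef, sub_comp, smul_comp]
        by_cases hi : i = (3 : Fin 6)
        · subst hi; rw [s_comp, if_pos rfl]; omega
        · rw [s_comp, if_neg (by intro hc; exact hi hc.symm)]; omega
      exact ext6 (hcomp 0) (hcomp 1) (hcomp 2) (hcomp 3) (hcomp 4) (hcomp 5)
    have hmem := hpir r hrlt
    rw [pir_x_zero F q hq r hr3 g, hrr] at hmem
    exact x_reg F hmem
  · set r := r' + s 3 with hrdef
    have hr3 : r 3 ≠ 0 := by
      rw [hrdef, add_comp, s_comp, if_pos rfl]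
      omega
    have hrlt : ∀ i, r i < q := by
      intro i
      rw [hrdef, add_comp, s_comp]
      have h1 := hr' i
      have h2 := hr' 3
      by_cases hi : (3 : Fin 6) = i
      · rw [if_pos hi]
        subst hi
        omega
      · rw [if_neg hi]
        omega
    have hmem := hpir r hrlt
    rw [pir_x_pos F q r hr3 g, hrdef, add_tsub_cancel_right] at hmem
    exact hmem

lemma x_reg_q_pow (hq : 0 < q) (n : ℕ) {g : A}
    (hx : (MvPowerSeries.X 3 : A) ^ n * g ∈ Iqsp F q) : g ∈ Iqsp F q := by
  induction n generalizing g with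
  | zero => rwa [pow_zero, one_mul] at hx
  | succ n ih =>
    apply x_reg_q F q hq
    apply ih
    rw [← mul_assoc, ← pow_succ]
    exact hx

lemma charPA (p : ℕ) [CharP F p] : CharP (MvPowerSeries (Fin 6) F) p :=
  charP_of_injective_ringHom (f := (MvPowerSeries.C : F →+* MvPowerSeries (Fin 6) F)) (fun a b h => by
    have := congrArg (MvPowerSeries.constantCoeff (σ := Fin 6) (R := F)) h
    rwa [MvPowerSeries.constantCoeff_C, MvPowerSeries.constantCoeff_C] at this) p

lemma dil_sub (g h : A) : dil F q (g - h) = dil F q g - dil F q h := by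
  funext e
  rw [sub_apply', dil_apply, dil_apply, dil_apply]
  split_ifs with hc
  · rw [sub_apply']
  · rw [sub_zero]

lemma dil_D_pow (p : ℕ) [Fact p.Prime] [CharP F p] (e : ℕ) :
    dil F (p ^ e) (D1 F) = D1 F ^ p ^ e ∧ dil F (p ^ e) (D2 F) = D2 F ^ p ^ e ∧
      dil F (p ^ e) (D3 F) = D3 F ^ p ^ e := by
  haveI := charPA F p
  have hq : 0 < p ^ e := pow_pos (Nat.Prime.pos Fact.out) e
  have key : ∀ (P Q : M), dil F (p ^ e) (mon F P - mon F Q) = (mon F P - mon F Q) ^ p ^ e := by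
    intro P Q
    rw [dil_sub, sub_pow_char_pow, dil_mon F _ hq, dil_mon F _ hq, mon_pow, mon_pow]
  exact ⟨key p1 n1, key p2 n2, key p3 n3⟩

end Part5

end Fedder

open MvPowerSeries

/-- Let `A = F[[u,v,w,x,y,z]]`, `char F = p > 0`, and
`I = (Δ₁, Δ₂, Δ₃)` the ideal of 2×2 minors of the 2×3 generic matrix
(`Δ₁ = vz − wy`, `Δ₂ = wx − uz`, `Δ₃ = uy − vx`).  For `q = p^e` and `s + t ≤ q − 1`, an
element `f` with `y^s z^t (Δ₂Δ₃)^{q−1} ≡ x^{s+t} f (mod I^{[q]})` is well-defined modulo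
`I^{[q]}` (any two such choices agree mod `I^{[q]}`), and satisfies `f·I ⊆ I^{[q]}`, i.e.
`f ∈ I^{[q]} :_A I`. -/
theorem fedder_f_st_well_defined (F : Type*) [Field F] (p : ℕ) [Fact p.Prime] [CharP F p]
    (e : ℕ) (s t : ℕ) (hst : s + t ≤ p ^ e - 1) :
    letI A := MvPowerSeries (Fin 6) F
    letI u : A := X 0
    letI v : A := X 1
    letI w : A := X 2
    letI x : A := X 3
    letI y : A := X 4
    letI z : A := X 5
    letI Δ₁ : A := v * z - w * y
    letI Δ₂ : A := w * x - u * z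
    letI Δ₃ : A := u * y - v * x
    letI I : Ideal A := Ideal.span {Δ₁, Δ₂, Δ₃}
    letI Iq : Ideal A := Ideal.span {Δ₁ ^ p ^ e, Δ₂ ^ p ^ e, Δ₃ ^ p ^ e}
    ∀ f f' : A,
      y ^ s * z ^ t * (Δ₂ * Δ₃) ^ (p ^ e - 1) - x ^ (s + t) * f ∈ Iq →
      y ^ s * z ^ t * (Δ₂ * Δ₃) ^ (p ^ e - 1) - x ^ (s + t) * f' ∈ Iq →
      f - f' ∈ Iq ∧ ∀ r ∈ I, f * r ∈ Iq := by
  intro f f' h1 h2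
  have hq : 0 < p ^ e := pow_pos (Fact.out (p := p.Prime)).pos e
  set Δ₁ := (X 1 * X 5 - X 2 * X 4 : MvPowerSeries (Fin 6) F) with hΔ1
  set Δ₂ := (X 2 * X 3 - X 0 * X 5 : MvPowerSeries (Fin 6) F) with hΔ2
  set Δ₃ := (X 0 * X 4 - X 1 * X 3 : MvPowerSeries (Fin 6) F) with hΔ3
  have hD1 : Δ₁ = Fedder.D1 F := by
    rw [hΔ1, Fedder.X_eq_mon, Fedder.X_eq_mon, Fedder.X_eq_mon, Fedder.X_eq_mon,
      Fedder.mon_mul_mon, Fedder.mon_mul_mon]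
    rfl
  have hD2 : Δ₂ = Fedder.D2 F := by
    rw [hΔ2, Fedder.X_eq_mon, Fedder.X_eq_mon, Fedder.X_eq_mon, Fedder.X_eq_mon,
      Fedder.mon_mul_mon, Fedder.mon_mul_mon]
    rfl
  have hD3 : Δ₃ = Fedder.D3 F := by
    rw [hΔ3, Fedder.X_eq_mon, Fedder.X_eq_mon, Fedder.X_eq_mon, Fedder.X_eq_mon,
      Fedder.mon_mul_mon, Fedder.mon_mul_mon]
    rfl
  obtain ⟨k1, k2, k3⟩ := Fedder.dil_D_pow F p e
  have hIq : Ideal.span {Δ₁ ^ p ^ e, Δ₂ ^ p ^ e, Δ₃ ^ p ^ e} = Fedder.Iqsp F (p ^ e) := by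
    rw [hD1, hD2, hD3, ← k1, ← k2, ← k3]
    rfl
  have hI : Ideal.span {Δ₁, Δ₂, Δ₃} = Fedder.Isp F := by
    rw [hD1, hD2, hD3]
    rfl
  set J := Fedder.Iqsp F (p ^ e) with hJ
  rw [hIq] at h1 h2
  have hJ2 : Δ₂ ^ p ^ e ∈ J := by
    rw [← hIq]
    exact Ideal.subset_span (by simp)
  have hJ3 : Δ₃ ^ p ^ e ∈ J := by
    rw [← hIq]
    exact Ideal.subset_span (by simp)
  have hq1 : p ^ e - 1 + 1 = p ^ e := by omega
  have hp2 : Δ₂ ^ (p ^ e - 1) * Δ₂ = Δ₂ ^ p ^ e := by rw [← pow_succ, hq1]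
  have hp3 : Δ₃ ^ (p ^ e - 1) * Δ₃ = Δ₃ ^ p ^ e := by rw [← pow_succ, hq1]
  have hxid : (X 3 : MvPowerSeries (Fin 6) F) * Δ₁ + X 4 * Δ₂ + X 5 * Δ₃ = 0 := by
    rw [hΔ1, hΔ2, hΔ3]
    ring
  constructor
  · -- f - f' ∈ Iq
    have hsub := Ideal.sub_mem _ h1 h2
    have heq : (X 4 : MvPowerSeries (Fin 6) F) ^ s * X 5 ^ t * (Δ₂ * Δ₃) ^ (p ^ e - 1) - (X 3 : MvPowerSeries (Fin 6) F) ^ (s + t) * f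
        - ((X 4 : MvPowerSeries (Fin 6) F) ^ s * X 5 ^ t * (Δ₂ * Δ₃) ^ (p ^ e - 1) - (X 3 : MvPowerSeries (Fin 6) F) ^ (s + t) * f')
        = (X 3 : MvPowerSeries (Fin 6) F) ^ (s + t) * (f' - f) := by ring
    rw [heq] at hsub
    rw [hIq]
    have hmem : f' - f ∈ J := Fedder.x_reg_q_pow F (p ^ e) hq (s + t) hsub
    have : f - f' = -(f' - f) := by ring
    rw [this]
    exact neg_mem hmem
  · intro r hr
    rw [hI] at hr
    rw [hIq]
    have hYmem : ∀ g, g = Δ₁ ∨ g = Δ₂ ∨ g = Δ₃ →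
        (X 4 : MvPowerSeries (Fin 6) F) ^ s * X 5 ^ t * (Δ₂ * Δ₃) ^ (p ^ e - 1) * g ∈ J := by
      intro g hg
      rcases hg with rfl | rfl | rfl
      · have hW : (X 3 : MvPowerSeries (Fin 6) F) * (Δ₁ * (Δ₂ * Δ₃) ^ (p ^ e - 1)) ∈ J := by
          have hident : (X 3 : MvPowerSeries (Fin 6) F) * (Δ₁ * (Δ₂ * Δ₃) ^ (p ^ e - 1))
              = -((X 4 : MvPowerSeries (Fin 6) F) * Δ₃ ^ (p ^ e - 1) * Δ₂ ^ p ^ e) - X 5 * Δ₂ ^ (p ^ e - 1) * Δ₃ ^ p ^ e := by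
            rw [mul_pow Δ₂ Δ₃ (p ^ e - 1), ← hp2, ← hp3]
            linear_combination (Δ₂ ^ (p ^ e - 1) * Δ₃ ^ (p ^ e - 1)) * hxid
          rw [hident]
          exact Ideal.sub_mem _ (neg_mem (Ideal.mul_mem_left _ _ hJ2))
            (Ideal.mul_mem_left _ _ hJ3)
        have hW' : Δ₁ * (Δ₂ * Δ₃) ^ (p ^ e - 1) ∈ J := Fedder.x_reg_q F (p ^ e) hq hW
        have heq : (X 4 : MvPowerSeries (Fin 6) F) ^ s * X 5 ^ t * (Δ₂ * Δ₃) ^ (p ^ e - 1) * Δ₁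
            = ((X 4 : MvPowerSeries (Fin 6) F) ^ s * X 5 ^ t) * (Δ₁ * (Δ₂ * Δ₃) ^ (p ^ e - 1)) := by ring
        rw [heq]
        exact Ideal.mul_mem_left _ _ hW'
      · have heq : (X 4 : MvPowerSeries (Fin 6) F) ^ s * X 5 ^ t * (Δ₂ * Δ₃) ^ (p ^ e - 1) * Δ₂
            = ((X 4 : MvPowerSeries (Fin 6) F) ^ s * X 5 ^ t * Δ₃ ^ (p ^ e - 1)) * Δ₂ ^ p ^ e := by
          rw [mul_pow Δ₂ Δ₃ (p ^ e - 1), ← hp2]; ring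
        rw [heq]
        exact Ideal.mul_mem_left _ _ hJ2
      · have heq : (X 4 : MvPowerSeries (Fin 6) F) ^ s * X 5 ^ t * (Δ₂ * Δ₃) ^ (p ^ e - 1) * Δ₃
            = ((X 4 : MvPowerSeries (Fin 6) F) ^ s * X 5 ^ t * Δ₂ ^ (p ^ e - 1)) * Δ₃ ^ p ^ e := by
          rw [mul_pow Δ₂ Δ₃ (p ^ e - 1), ← hp3]; ring
        rw [heq]
        exact Ideal.mul_mem_left _ _ hJ3
    have hkey : ∀ g, g = Δ₁ ∨ g = Δ₂ ∨ g = Δ₃ → f * g ∈ J := by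
      intro g hg
      apply Fedder.x_reg_q_pow F (p ^ e) hq (s + t)
      have heq : (X 3 : MvPowerSeries (Fin 6) F) ^ (s + t) * (f * g)
          = (X 4 : MvPowerSeries (Fin 6) F) ^ s * X 5 ^ t * (Δ₂ * Δ₃) ^ (p ^ e - 1) * g
            - ((X 4 : MvPowerSeries (Fin 6) F) ^ s * X 5 ^ t * (Δ₂ * Δ₃) ^ (p ^ e - 1) - (X 3 : MvPowerSeries (Fin 6) F) ^ (s + t) * f) * g := by ring
      show (X 3 : MvPowerSeries (Fin 6) F) ^ (s + t) * (f * g) ∈ J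
      rw [heq]
      exact Ideal.sub_mem _ (hYmem g hg) (Ideal.mul_mem_right _ _ h1)
    refine Submodule.span_induction (p := fun g _ => f * g ∈ J) ?_ ?_ ?_ ?_ hr
    · intro g hg
      show f * g ∈ J
      apply hkey
      rw [hD1, hD2, hD3]
      simpa using hg
    · show f * (0 : MvPowerSeries (Fin 6) F) ∈ J
      rw [mul_zero]
      exact Ideal.zero_mem _
    · intro g1 g2 hx1 hx2 hm1 hm2
      show f * (g1 + g2) ∈ J
      have hm1' : f * g1 ∈ J := hm1
      have hm2' : f * g2 ∈ J := hm2
      rw [mul_add]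
      exact Ideal.add_mem _ hm1' hm2'
    · intro a g hx hm
      show f * (a • g) ∈ J
      have hm' : f * g ∈ J := hm
      rw [smul_eq_mul, show f * (a * g) = a * (f * g) from by ring]
      exact Ideal.mul_mem_left _ _ hm'
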